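/- Let d ∈ ℕ^I be nonzero and θ ∈ ℝ^I. Then there exists an integral weight ω ∈ ℤ^I with the following properties: (1) any object M of 𝒜 with φ(M) = d is θ-semistable (resp. θ-stable, θ-polystable) if and only if it is ω-semistable (resp. ω-stable, ω-polystable); (2) if M is a θ-semistable object with φ(M) = d, then every Jordan–Hölder filtration of M with respect to θ is a Jordan–Hölder filtration of M with respect to ω, and conversely; (3) two θ-semistable objects M, N with φ(M) = φ(N) = d are S_θ-equivalent if and only if they are S_ω-equivalent. -/

import Mathlib

open CategoryTheory CategoryTheory.Limits

attribute [local instance] CategoryTheory.Limits.HasFiniteBiproducts.of_hasFiniteProducts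

variable {𝒜 : Type*} [Category 𝒜] [Abelian 𝒜] {I : Type*} [Fintype I]

/-- The `θ`-degree of an object `M`: `deg_θ(M) = ∑ i, θ i * φ i M`. -/
noncomputable def degTheta (φ : I → 𝒜 → ℤ) (θ : I → ℝ) (M : 𝒜) : ℝ :=
  ∑ i, θ i * (φ i M : ℝ)

/-- The rank of an object `M`: `rk(M) = ∑ i, φ i M`. -/
def rkPhi (φ : I → 𝒜 → ℤ) (M : 𝒜) : ℤ := ∑ i, φ i M

/-- The `θ`-slope of an object `M`: `μ_θ(M) = deg_θ(M) / rk(M)`. -/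
noncomputable def muSlope (φ : I → 𝒜 → ℤ) (θ : I → ℝ) (M : 𝒜) : ℝ :=
  degTheta φ θ M / (rkPhi φ M : ℝ)

/-- The family `φ` is additive on short exact sequences. -/
def IsAdditiveFamily (φ : I → 𝒜 → ℤ) : Prop :=
  ∀ i, ∀ S : ShortComplex 𝒜, S.ShortExact → φ i S.X₂ = φ i S.X₁ + φ i S.X₃

/-- The family `φ` is positive. -/
def IsPositiveFamily (φ : I → 𝒜 → ℤ) : Prop :=
  (∀ i, ∀ M : 𝒜, 0 ≤ φ i M) ∧ ∀ M : 𝒜, ¬ IsZero M → ∃ i, 0 < φ i M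

/-- `M` is `θ`-semistable: it is nonzero and every nonzero proper subobject has
slope at most that of `M`. -/
noncomputable def Semistable (φ : I → 𝒜 → ℤ) (θ : I → ℝ) (M : 𝒜) : Prop :=
  ¬ IsZero M ∧ ∀ N : Subobject M, N ≠ ⊥ → N ≠ ⊤ →
    muSlope φ θ ((N : 𝒜)) ≤ muSlope φ θ M

/-- `M` is `θ`-stable. -/
noncomputable def Stable (φ : I → 𝒜 → ℤ) (θ : I → ℝ) (M : 𝒜) : Prop :=
  ¬ IsZero M ∧ ∀ N : Subobject M, N ≠ ⊥ → N ≠ ⊤ →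
    muSlope φ θ ((N : 𝒜)) < muSlope φ θ M


/-- The slope `μ_θ(d)` of a dimension vector `d ∈ ℕ^I`. -/
noncomputable def muSlopeVec (θ : I → ℝ) (d : I → ℕ) : ℝ :=
  (∑ i, θ i * (d i : ℝ)) / (∑ i, (d i : ℝ))

/-- `M` has dimension vector `d`, i.e. `φ i M = d i` for all `i`. -/
def HasDimVec (φ : I → 𝒜 → ℤ) (M : 𝒜) (d : I → ℕ) : Prop :=
  ∀ i, φ i M = (d i : ℤ)

/-- `e ∈ S_d`: `e ∈ ℕ^I \ ℚd` and there exist an object `M` with `φ(M) = d` and a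
subobject `N` of `M` with `φ(N) = e`. -/
def MemSd (φ : I → 𝒜 → ℤ) (d e : I → ℕ) : Prop :=
  (¬ ∃ q : ℚ, ∀ i, (e i : ℚ) = q * (d i : ℚ)) ∧
  ∃ (M : 𝒜) (N : Subobject M), HasDimVec φ M d ∧ HasDimVec φ ((N : 𝒜)) e

/-- `θ` and `ω` lie in the same facet of the hyperplane arrangement `ℋ(d)`:
`sgn (f(d,e)(θ)) = sgn (f(d,e)(ω))` for every `e ∈ S_d`. -/
def SameFacet (φ : I → 𝒜 → ℤ) (d : I → ℕ) (θ ω : I → ℝ) : Prop :=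
  ∀ e : I → ℕ, MemSd φ d e →
    Real.sign (muSlopeVec θ d - muSlopeVec θ e) =
      Real.sign (muSlopeVec ω d - muSlopeVec ω e)

/-- The quotient object `M_{i-1}/M_i` of a decreasing chain of subobjects. -/
noncomputable def quotObj {M : 𝒜} {n : ℕ} (F : Fin (n + 1) → Subobject M)
    (hmono : ∀ i : Fin n, F i.succ ≤ F i.castSucc) (i : Fin n) : 𝒜 :=
  cokernel (Subobject.ofLE (F i.succ) (F i.castSucc) (hmono i))

/-- `(F i)` is a Jordan–Hölder filtration of `M` with respect to `θ`:
`n ≥ 1`, `F 0 = M`, `F n = 0`, each `F (i+1)` is a proper subobject of `F i`, each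
successive quotient is `θ`-stable, and `μ_θ(F i) = μ_θ(M)` for `i = 0, …, n−1`. -/
noncomputable def IsJHFiltration (φ : I → 𝒜 → ℤ) (θ : I → ℝ) {M : 𝒜} {n : ℕ}
    (F : Fin (n + 1) → Subobject M)
    (hmono : ∀ i : Fin n, F i.succ ≤ F i.castSucc) : Prop :=
  1 ≤ n ∧ F 0 = ⊤ ∧ F (Fin.last n) = ⊥ ∧
  (∀ i : Fin n, F i.succ ≠ F i.castSucc) ∧
  (∀ i : Fin n, Stable φ θ (quotObj F hmono i)) ∧
  (∀ i : Fin n, muSlope φ θ (((F i.castSucc) : 𝒜)) = muSlope φ θ M)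

/-- `M` is `θ`-polystable: `θ`-semistable and isomorphic to a finite direct sum of
`θ`-stable objects. -/
noncomputable def Polystable (φ : I → 𝒜 → ℤ) (θ : I → ℝ) (M : 𝒜) : Prop :=
  Semistable φ θ M ∧
  ∃ (n : ℕ) (X : Fin n → 𝒜), (∀ i, Stable φ θ (X i)) ∧ Nonempty (M ≅ ⨁ X)

/-- `M` and `N` are `S_θ`-equivalent. -/
noncomputable def SEquiv (φ : I → 𝒜 → ℤ) (θ : I → ℝ) (M N : 𝒜) : Prop :=
  ∃ (n : ℕ) (F : Fin (n + 1) → Subobject M)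
    (hF : ∀ i : Fin n, F i.succ ≤ F i.castSucc)
    (G : Fin (n + 1) → Subobject N)
    (hG : ∀ i : Fin n, G i.succ ≤ G i.castSucc)
    (π : Equiv.Perm (Fin n)),
    IsJHFiltration φ θ F hF ∧ IsJHFiltration φ θ G hG ∧
    ∀ i : Fin n, Nonempty (quotObj F hF i ≅ quotObj G hG (π i))


/-! ### Auxiliary lemmas -/

section Aux

private lemma sum_mul_sum_swapQ' {I J : Type*} [Fintype I] [Fintype J]
    (c : I → ℚ) (a : I → J → ℚ) (x : J → ℚ) :
    ∑ i, c i * ∑ j, a i j * x j = ∑ j, (∑ i, c i * a i j) * x j := by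
  simp only [Finset.mul_sum, Finset.sum_mul]
  rw [Finset.sum_comm]
  exact Finset.sum_congr rfl fun j _ => Finset.sum_congr rfl fun i _ => by ring

private lemma sum_mul_sum_swapR' {I J : Type*} [Fintype I] [Fintype J]
    (c : I → ℚ) (a : I → J → ℚ) (x : J → ℝ) :
    ∑ i, (c i : ℝ) * ∑ j, (a i j : ℝ) * x j = ∑ j, ((∑ i, c i * a i j : ℚ) : ℝ) * x j := by
  push_cast
  simp only [Finset.mul_sum, Finset.sum_mul]
  rw [Finset.sum_comm]
  exact Finset.sum_congr rfl fun j _ => Finset.sum_congr rfl fun i _ => by ring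

private lemma exists_rat_sign' {I K : Type*} [Fintype I] [Fintype K] (c : K → I → ℚ) (θ : I → ℝ) :
    ∃ ω : I → ℚ, ∀ k,
      (0 < ∑ i, (c k i : ℝ) * θ i ↔ 0 < ∑ i, (c k i : ℝ) * (ω i : ℝ)) ∧
      ((∑ i, (c k i : ℝ) * θ i) = 0 ↔ (∑ i, (c k i : ℝ) * (ω i : ℝ)) = 0) := by
  set V : Submodule ℚ ℝ := Submodule.span ℚ (Set.range θ) with hV
  haveI : FiniteDimensional ℚ V := FiniteDimensional.span_of_finite ℚ (Set.finite_range θ)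
  set m := Module.finrank ℚ V with hm
  let b : Module.Basis (Fin m) ℚ V := Module.finBasis ℚ V
  have hmem : ∀ i, θ i ∈ V := fun i => Submodule.subset_span (Set.mem_range_self i)
  set a : I → Fin m → ℚ := fun i j => b.repr ⟨θ i, hmem i⟩ j with ha
  have key1 : ∀ i, θ i = ∑ j, (a i j : ℝ) * ((b j : ℝ)) := by
    intro i
    have h := b.sum_repr ⟨θ i, hmem i⟩
    have h3 : θ i = ((∑ j, b.repr ⟨θ i, hmem i⟩ j • b j : V) : ℝ) := by rw [h]
    rw [h3]
    push_cast
    exact Finset.sum_congr rfl fun j _ => by rw [Rat.smul_def]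
  set L : K → Fin m → ℚ := fun k j => ∑ i, c k i * a i j with hL
  set v : K → ℝ := fun k => ∑ j, (L k j : ℝ) * ((b j : ℝ)) with hv
  have key2 : ∀ k, ∑ i, (c k i : ℝ) * θ i = v k := by
    intro k
    calc ∑ i, (c k i : ℝ) * θ i = ∑ i, (c k i : ℝ) * ∑ j, (a i j : ℝ) * ((b j : ℝ)) := by
          exact Finset.sum_congr rfl fun i _ => by rw [← key1]
      _ = v k := sum_mul_sum_swapR' _ _ _
  have key3 : ∀ k, v k = 0 → ∀ j, L k j = 0 := by
    intro k hvk
    have h0 : (∑ j, L k j • b j : V) = 0 := by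
      apply Subtype.val_injective
      push_cast
      rw [← hvk, hv]
      exact Finset.sum_congr rfl fun j _ => by rw [Rat.smul_def]
    exact Fintype.linearIndependent_iff.mp b.linearIndependent _ h0
  classical
  set εf : K → ℝ := fun k => if v k = 0 then 1 else |v k| / (∑ j, |(L k j : ℝ)| + 1) with hεf
  set εs : Finset ℝ := insert 1 (Finset.univ.image εf) with hεs
  have hne : εs.Nonempty := ⟨1, Finset.mem_insert_self _ _⟩
  set ε : ℝ := εs.min' hne with hε
  have εpos : 0 < ε := by
    have hm' := εs.min'_mem hne
    rw [← hε] at hm'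
    rw [hεs] at hm'
    rcases Finset.mem_insert.mp hm' with h | h
    · rw [h]; norm_num
    · obtain ⟨k, _, hk⟩ := Finset.mem_image.mp h
      rw [← hk, hεf]
      dsimp only
      split_ifs with h'
      · norm_num
      · have : (0:ℝ) < ∑ j, |(L k j : ℝ)| + 1 := by positivity
        exact div_pos (abs_pos.mpr h') this
  choose t ht using fun j => exists_rat_near ((b j : ℝ)) εpos
  refine ⟨fun i => ∑ j, a i j * t j, fun k => ?_⟩
  have key4 : ∑ i, (c k i : ℝ) * (((∑ j, a i j * t j : ℚ)) : ℝ) = ∑ j, (L k j : ℝ) * ((t j : ℝ)) := by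
    have h := congrArg (fun q : ℚ => (q : ℝ)) (sum_mul_sum_swapQ' (c k) a t)
    simp only [hL]
    push_cast at h ⊢
    exact h
  rw [key2, key4]
  set w : ℝ := ∑ j, (L k j : ℝ) * ((t j : ℝ)) with hw
  rcases eq_or_ne (v k) 0 with h0 | h0
  · have hz : ∀ j, L k j = 0 := key3 k h0
    have hw0 : w = 0 := by
      rw [hw]
      refine Finset.sum_eq_zero fun j _ => ?_
      rw [hz j]; norm_num
    rw [h0, hw0]
    simp
  · have hdiff : |w - v k| < |v k| := by
      have heq : w - v k = ∑ j, (L k j : ℝ) * (((t j : ℝ)) - ((b j : ℝ))) := by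
        rw [hw, hv]
        rw [← Finset.sum_sub_distrib]
        exact Finset.sum_congr rfl fun j _ => by ring
      have h1 : |w - v k| ≤ ∑ j, |(L k j : ℝ)| * |((t j : ℝ)) - ((b j : ℝ))| := by
        rw [heq]
        refine (Finset.abs_sum_le_sum_abs _ _).trans ?_
        exact le_of_eq (Finset.sum_congr rfl fun j _ => abs_mul _ _)
      have h2 : ∑ j, |(L k j : ℝ)| * |((t j : ℝ)) - ((b j : ℝ))| ≤ (∑ j, |(L k j : ℝ)|) * ε := by
        rw [Finset.sum_mul]
        refine Finset.sum_le_sum fun j _ => ?_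
        refine mul_le_mul_of_nonneg_left ?_ (abs_nonneg _)
        rw [abs_sub_comm]
        exact (ht j).le
      have h3 : ε ≤ |v k| / (∑ j, |(L k j : ℝ)| + 1) := by
        have := εs.min'_le (εf k)
          (by rw [hεs]; exact Finset.mem_insert_of_mem (Finset.mem_image_of_mem _ (Finset.mem_univ k)))
        rw [← hε] at this
        rw [hεf] at this
        simpa [h0] using this
      have hS : (0:ℝ) ≤ ∑ j, |(L k j : ℝ)| := Finset.sum_nonneg fun j _ => abs_nonneg _
      have hvpos : 0 < |v k| := abs_pos.mpr h0
      calc |w - v k| ≤ (∑ j, |(L k j : ℝ)|) * ε := h1.trans h2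
        _ ≤ (∑ j, |(L k j : ℝ)|) * (|v k| / (∑ j, |(L k j : ℝ)| + 1)) :=
            mul_le_mul_of_nonneg_left h3 hS
        _ < |v k| := by
            rw [mul_div_assoc']
            rw [div_lt_iff₀ (by linarith)]
            nlinarith
    have habs := abs_lt.mp hdiff
    rcases h0.lt_or_gt with hneg | hpos
    · have hwneg : w < 0 := by
        have := habs.2
        rw [abs_of_neg hneg] at this
        linarith
      constructor <;> constructor <;> intro h <;> linarith
    · have hwpos : 0 < w := by
        have := habs.1
        rw [abs_of_pos hpos] at this
        linarith
      constructor <;> constructor <;> intro h <;> linarith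

private lemma exists_int_sign' {I K : Type*} [Fintype I] [Fintype K] (c : K → I → ℚ) (θ : I → ℝ) :
    ∃ ω : I → ℤ, ∀ k,
      (0 < ∑ i, (c k i : ℝ) * θ i ↔ 0 < ∑ i, (c k i : ℝ) * (ω i : ℝ)) ∧
      ((∑ i, (c k i : ℝ) * θ i) = 0 ↔ (∑ i, (c k i : ℝ) * (ω i : ℝ)) = 0) := by
  obtain ⟨ω, hω⟩ := exists_rat_sign' c θ
  set N : ℕ := ∏ i, (ω i).den with hN
  have hNpos : 0 < N := Finset.prod_pos fun i _ => (ω i).pos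
  have hdvd : ∀ i, (ω i).den ∣ N := fun i => Finset.dvd_prod_of_mem _ (Finset.mem_univ i)
  choose u hu using hdvd
  refine ⟨fun i => (u i : ℤ) * (ω i).num, fun k => ?_⟩
  have hcast : ∀ i, (((u i : ℤ) * (ω i).num : ℤ) : ℝ) = (N : ℝ) * ((ω i : ℝ)) := by
    intro i
    have hnum : ((ω i).num : ℚ) = ((ω i).den : ℚ) * ω i := by
      rw [mul_comm, Rat.mul_den_eq_num]
    have hq : (((u i : ℤ) * (ω i).num : ℤ) : ℚ) = (N : ℚ) * ω i := by
      push_cast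
      rw [hnum, hu i]
      push_cast
      ring
    exact_mod_cast congrArg (fun q : ℚ => (q : ℝ)) hq
  have hsum : ∑ i, (c k i : ℝ) * (((u i : ℤ) * (ω i).num : ℤ) : ℝ)
      = (N : ℝ) * ∑ i, (c k i : ℝ) * ((ω i : ℝ)) := by
    rw [Finset.mul_sum]
    exact Finset.sum_congr rfl fun i _ => by rw [hcast i]; ring
  rw [hsum]
  have hN' : (0:ℝ) < N := by exact_mod_cast hNpos
  obtain ⟨h1, h2⟩ := hω k
  constructor
  · rw [h1]
    constructor <;> intro h <;> nlinarith
  · rw [h2]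
    constructor <;> intro h
    · rw [h, mul_zero]
    · rcases mul_eq_zero.mp h with h' | h'
      · linarith
      · exact h'

private lemma vecdiff' {I : Type*} [Fintype I] (e f : I → ℕ) (x : I → ℝ) :
    ∑ i, (((((f i : ℚ) / ((∑ j, f j : ℕ) : ℚ)) - ((e i : ℚ) / ((∑ j, e j : ℕ) : ℚ))) : ℚ) : ℝ) * x i
      = muSlopeVec x f - muSlopeVec x e := by
  unfold muSlopeVec
  push_cast
  simp only [sub_mul, Finset.sum_sub_distrib]
  congr 1
  · rw [Finset.sum_div]
    exact Finset.sum_congr rfl fun i _ => by ring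
  · rw [Finset.sum_div]
    exact Finset.sum_congr rfl fun i _ => by ring

end Aux

section AbelianAux

variable {𝒜 : Type*} [Category 𝒜] [Abelian 𝒜] {I : Type*} [Fintype I]

private lemma phi_le_of_mono' (φ : I → 𝒜 → ℤ) (hadd : IsAdditiveFamily φ)
    (hpos : IsPositiveFamily φ) {X M : 𝒜} (f : X ⟶ M) [Mono f] (i : I) :
    φ i X ≤ φ i M := by
  have h : φ i M = φ i X + φ i (cokernel f) :=
    hadd i (ShortComplex.mk f (cokernel.π f) (cokernel.condition f))
      ⟨ShortComplex.exact_of_g_is_cokernel _ (cokernelIsCokernel f)⟩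
  rw [h]
  exact le_add_of_nonneg_right (hpos.1 i _)

private lemma phi_le_of_epi' (φ : I → 𝒜 → ℤ) (hadd : IsAdditiveFamily φ)
    (hpos : IsPositiveFamily φ) {M Y : 𝒜} (g : M ⟶ Y) [Epi g] (i : I) :
    φ i Y ≤ φ i M := by
  have h : φ i M = φ i (kernel g) + φ i Y :=
    hadd i (ShortComplex.mk (kernel.ι g) g (kernel.condition g))
      ⟨ShortComplex.exact_of_f_is_kernel _ (kernelIsKernel g)⟩
  rw [h]
  exact le_add_of_nonneg_left (hpos.1 i _)

/-- `X` has dimension vector bounded by `d`. -/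
private def InBoxD (φ : I → 𝒜 → ℤ) (d : I → ℕ) (X : 𝒜) : Prop := ∀ i, φ i X ≤ (d i : ℤ)

private lemma muSlope_eq_vec' (φ : I → 𝒜 → ℤ) (hpos : IsPositiveFamily φ)
    (x : I → ℝ) (X : 𝒜) :
    muSlope φ x X = muSlopeVec x (fun i => (φ i X).toNat) := by
  unfold muSlope degTheta rkPhi muSlopeVec
  have h : ∀ i, (((φ i X).toNat : ℕ) : ℝ) = ((φ i X : ℤ) : ℝ) := by
    intro i
    have := Int.toNat_of_nonneg (hpos.1 i X)
    exact_mod_cast congrArg (fun z : ℤ => (z : ℝ)) this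
  congr 1
  · exact Finset.sum_congr rfl fun i _ => by rw [h i]
  · push_cast
    exact Finset.sum_congr rfl fun i _ => by rw [h i]

/-- Two weights give the same slope comparisons on objects with dimension vector
bounded by `d`. -/
private def GoodPair (φ : I → 𝒜 → ℤ) (d : I → ℕ) (θ ω : I → ℝ) : Prop :=
  ∀ X Y : 𝒜, InBoxD φ d X → InBoxD φ d Y →
    ((muSlope φ θ X < muSlope φ θ Y ↔ muSlope φ ω X < muSlope φ ω Y) ∧
     (muSlope φ θ X = muSlope φ θ Y ↔ muSlope φ ω X = muSlope φ ω Y))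

private lemma goodPair_le {φ : I → 𝒜 → ℤ} {d : I → ℕ} {θ ω : I → ℝ}
    (H : GoodPair φ d θ ω) {X Y : 𝒜} (hX : InBoxD φ d X) (hY : InBoxD φ d Y) :
    muSlope φ θ X ≤ muSlope φ θ Y ↔ muSlope φ ω X ≤ muSlope φ ω Y := by
  have h := H X Y hX hY
  rw [le_iff_lt_or_eq, le_iff_lt_or_eq, h.1, h.2]

private lemma inBox_subobject' (φ : I → 𝒜 → ℤ) (hadd : IsAdditiveFamily φ)
    (hpos : IsPositiveFamily φ) {d : I → ℕ} {M : 𝒜} (hM : InBoxD φ d M)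
    (N : Subobject M) : InBoxD φ d ((N : 𝒜)) :=
  fun i => (phi_le_of_mono' φ hadd hpos N.arrow i).trans (hM i)

private lemma semistable_iff' (φ : I → 𝒜 → ℤ) (hadd : IsAdditiveFamily φ)
    (hpos : IsPositiveFamily φ) {d : I → ℕ} {θ ω : I → ℝ} (H : GoodPair φ d θ ω)
    {M : 𝒜} (hM : InBoxD φ d M) :
    Semistable φ θ M ↔ Semistable φ ω M := by
  unfold Semistable
  refine and_congr Iff.rfl (forall_congr' fun N => imp_congr Iff.rfl (imp_congr Iff.rfl ?_))
  exact goodPair_le H (inBox_subobject' φ hadd hpos hM N) hM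

private lemma stable_iff' (φ : I → 𝒜 → ℤ) (hadd : IsAdditiveFamily φ)
    (hpos : IsPositiveFamily φ) {d : I → ℕ} {θ ω : I → ℝ} (H : GoodPair φ d θ ω)
    {M : 𝒜} (hM : InBoxD φ d M) :
    Stable φ θ M ↔ Stable φ ω M := by
  unfold Stable
  refine and_congr Iff.rfl (forall_congr' fun N => imp_congr Iff.rfl (imp_congr Iff.rfl ?_))
  exact (H _ _ (inBox_subobject' φ hadd hpos hM N) hM).1

private lemma inBox_quotObj' (φ : I → 𝒜 → ℤ) (hadd : IsAdditiveFamily φ)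
    (hpos : IsPositiveFamily φ) {d : I → ℕ} {M : 𝒜} (hM : InBoxD φ d M)
    {n : ℕ} (F : Fin (n + 1) → Subobject M)
    (hmono : ∀ i : Fin n, F i.succ ≤ F i.castSucc) (i : Fin n) :
    InBoxD φ d (quotObj F hmono i) := by
  intro j
  have h1 : φ j (quotObj F hmono i) ≤ φ j (((F i.castSucc) : 𝒜)) := by
    unfold quotObj
    exact phi_le_of_epi' φ hadd hpos (cokernel.π _) j
  exact h1.trans (inBox_subobject' φ hadd hpos hM (F i.castSucc) j)

private lemma jh_iff' (φ : I → 𝒜 → ℤ) (hadd : IsAdditiveFamily φ)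
    (hpos : IsPositiveFamily φ) {d : I → ℕ} {θ ω : I → ℝ} (H : GoodPair φ d θ ω)
    {M : 𝒜} (hM : InBoxD φ d M) {n : ℕ} (F : Fin (n + 1) → Subobject M)
    (hmono : ∀ i : Fin n, F i.succ ≤ F i.castSucc) :
    IsJHFiltration φ θ F hmono ↔ IsJHFiltration φ ω F hmono := by
  unfold IsJHFiltration
  refine and_congr Iff.rfl (and_congr Iff.rfl (and_congr Iff.rfl (and_congr Iff.rfl
    (and_congr ?_ ?_))))
  · exact forall_congr' fun i =>
      stable_iff' φ hadd hpos H (inBox_quotObj' φ hadd hpos hM F hmono i)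
  · exact forall_congr' fun i =>
      (H _ _ (inBox_subobject' φ hadd hpos hM (F i.castSucc)) hM).2

private lemma polystable_mp' (φ : I → 𝒜 → ℤ) (hadd : IsAdditiveFamily φ)
    (hpos : IsPositiveFamily φ) {d : I → ℕ} {θ ω : I → ℝ} (H : GoodPair φ d θ ω)
    {M : 𝒜} (hM : InBoxD φ d M) (h : Polystable φ θ M) : Polystable φ ω M := by
  obtain ⟨hss, n, X, hX, ⟨iso⟩⟩ := h
  refine ⟨(semistable_iff' φ hadd hpos H hM).mp hss, n, X, fun b => ?_, ⟨iso⟩⟩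
  have hbox : InBoxD φ d (X b) := by
    have hmono : Mono (biproduct.ι X b ≫ iso.inv) := mono_comp _ _
    exact fun i => (phi_le_of_mono' φ hadd hpos (biproduct.ι X b ≫ iso.inv) i).trans (hM i)
  exact (stable_iff' φ hadd hpos H hbox).mp (hX b)

private lemma goodPair_symm {φ : I → 𝒜 → ℤ} {d : I → ℕ} {θ ω : I → ℝ}
    (H : GoodPair φ d θ ω) : GoodPair φ d ω θ :=
  fun X Y hX hY => ⟨(H X Y hX hY).1.symm, (H X Y hX hY).2.symm⟩

private lemma sequiv_iff' (φ : I → 𝒜 → ℤ) (hadd : IsAdditiveFamily φ)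
    (hpos : IsPositiveFamily φ) {d : I → ℕ} {θ ω : I → ℝ} (H : GoodPair φ d θ ω)
    {M N : 𝒜} (hM : InBoxD φ d M) (hN : InBoxD φ d N) :
    SEquiv φ θ M N ↔ SEquiv φ ω M N := by
  constructor
  · rintro ⟨n, F, hF, G, hG, π, h1, h2, h3⟩
    exact ⟨n, F, hF, G, hG, π, (jh_iff' φ hadd hpos H hM F hF).mp h1,
      (jh_iff' φ hadd hpos H hN G hG).mp h2, h3⟩
  · rintro ⟨n, F, hF, G, hG, π, h1, h2, h3⟩
    exact ⟨n, F, hF, G, hG, π, (jh_iff' φ hadd hpos H hM F hF).mpr h1,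
      (jh_iff' φ hadd hpos H hN G hG).mpr h2, h3⟩

end AbelianAux
/-- for every nonzero `d ∈ ℕ^I` and `θ ∈ ℝ^I` there is an integral weight
`ω ∈ ℤ^I` such that (1) objects of dimension vector `d` are `θ`-semistable
(resp. `θ`-stable, `θ`-polystable) iff they are `ω`-semistable (resp. `ω`-stable,
`ω`-polystable); (2) Jordan–Hölder filtrations with respect to `θ` and `ω` coincide for
`θ`-semistable objects of dimension vector `d`; and (3) `S_θ`-equivalence coincides with
`S_ω`-equivalence for such objects. -/
theorem exists_integral_weight_equivalent [Nonempty I]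
    (φ : I → 𝒜 → ℤ) (hadd : IsAdditiveFamily φ) (hpos : IsPositiveFamily φ)
    (d : I → ℕ) (hd : d ≠ 0) (θ : I → ℝ) :
    ∃ ω : I → ℤ,
      (∀ M : 𝒜, HasDimVec φ M d →
        ((Semistable φ θ M ↔ Semistable φ (fun i => (ω i : ℝ)) M) ∧
         (Stable φ θ M ↔ Stable φ (fun i => (ω i : ℝ)) M) ∧
         (Polystable φ θ M ↔ Polystable φ (fun i => (ω i : ℝ)) M))) ∧
      (∀ M : 𝒜, HasDimVec φ M d → Semistable φ θ M →
        ∀ (n : ℕ) (F : Fin (n + 1) → Subobject M)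
          (hmono : ∀ i : Fin n, F i.succ ≤ F i.castSucc),
          (IsJHFiltration φ θ F hmono ↔
            IsJHFiltration φ (fun i => (ω i : ℝ)) F hmono)) ∧
      (∀ M N : 𝒜, HasDimVec φ M d → HasDimVec φ N d →
        Semistable φ θ M → Semistable φ θ N →
        (SEquiv φ θ M N ↔ SEquiv φ (fun i => (ω i : ℝ)) M N)) := by
  classical
  let K : Type _ := (∀ i, Fin (d i + 1)) × (∀ i, Fin (d i + 1))
  let c : K → I → ℚ := fun k i =>
    ((k.2 i : ℕ) : ℚ) / ((∑ j, ((k.2 j : ℕ)) : ℕ) : ℚ) -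
    ((k.1 i : ℕ) : ℚ) / ((∑ j, ((k.1 j : ℕ)) : ℕ) : ℚ)
  obtain ⟨ω, hω⟩ := exists_int_sign' c θ
  have Hvec : ∀ e f : I → ℕ, (∀ i, e i ≤ d i) → (∀ i, f i ≤ d i) →
      ((muSlopeVec θ e < muSlopeVec θ f ↔
          muSlopeVec (fun i => (ω i : ℝ)) e < muSlopeVec (fun i => (ω i : ℝ)) f) ∧
       (muSlopeVec θ e = muSlopeVec θ f ↔
          muSlopeVec (fun i => (ω i : ℝ)) e = muSlopeVec (fun i => (ω i : ℝ)) f)) := by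
    intro e f he hf
    let k : K := (fun i => ⟨e i, Nat.lt_succ_of_le (he i)⟩,
      fun i => ⟨f i, Nat.lt_succ_of_le (hf i)⟩)
    have hcθ : ∑ i, (c k i : ℝ) * θ i = muSlopeVec θ f - muSlopeVec θ e := vecdiff' e f θ
    have hcω : ∑ i, (c k i : ℝ) * ((ω i : ℤ) : ℝ) =
        muSlopeVec (fun i => (ω i : ℝ)) f - muSlopeVec (fun i => (ω i : ℝ)) e :=
      vecdiff' e f _
    have p1 : (0 < muSlopeVec θ f - muSlopeVec θ e) ↔
        (0 < muSlopeVec (fun i => (ω i : ℝ)) f - muSlopeVec (fun i => (ω i : ℝ)) e) := by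
      rw [← hcθ, ← hcω]; exact (hω k).1
    have p2 : (muSlopeVec θ f - muSlopeVec θ e = 0) ↔
        (muSlopeVec (fun i => (ω i : ℝ)) f - muSlopeVec (fun i => (ω i : ℝ)) e = 0) := by
      rw [← hcθ, ← hcω]; exact (hω k).2
    constructor
    · constructor <;> intro h
      · exact sub_pos.mp (p1.mp (sub_pos.mpr h))
      · exact sub_pos.mp (p1.mpr (sub_pos.mpr h))
    · constructor <;> intro h
      · have q : muSlopeVec θ f - muSlopeVec θ e = 0 := by rw [h, sub_self]
        exact (sub_eq_zero.mp (p2.mp q)).symm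
      · have q : muSlopeVec (fun i => (ω i : ℝ)) f - muSlopeVec (fun i => (ω i : ℝ)) e = 0 := by
          rw [h, sub_self]
        exact (sub_eq_zero.mp (p2.mpr q)).symm
  have Hobj : GoodPair φ d θ (fun i => (ω i : ℝ)) := by
    intro X Y hX hY
    rw [muSlope_eq_vec' φ hpos θ X, muSlope_eq_vec' φ hpos θ Y,
      muSlope_eq_vec' φ hpos _ X, muSlope_eq_vec' φ hpos _ Y]
    exact Hvec _ _ (fun i => Int.toNat_le.mpr (hX i)) (fun i => Int.toNat_le.mpr (hY i))
  refine ⟨ω, ?_, ?_, ?_⟩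
  · intro M hdim
    have hM : InBoxD φ d M := fun i => le_of_eq (hdim i)
    exact ⟨semistable_iff' φ hadd hpos Hobj hM, stable_iff' φ hadd hpos Hobj hM,
      ⟨fun h => polystable_mp' φ hadd hpos Hobj hM h,
       fun h => polystable_mp' φ hadd hpos (goodPair_symm Hobj) hM h⟩⟩
  · intro M hdim _ n F hmono
    exact jh_iff' φ hadd hpos Hobj (fun i => le_of_eq (hdim i)) F hmono
  · intro M N hdM hdN _ _
    exact sequiv_iff' φ hadd hpos Hobj (fun i => le_of_eq (hdM i)) (fun i => le_of_eq (hdN i))
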